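/- If M is an n×n positive semi-definite real matrix and x, y are vectors in ℝ^n with all components strictly positive, then the 2n×2n block matrix J = [[-M, I], [Y, X]] is nonsingular, where X = diag(x) and Y = diag(y). -/

import Mathlib

/-- If `M` is an `n×n` positive semi-definite real matrix and `x, y` have all
components strictly positive, then the block matrix `[[-M, I], [Y, X]]` with
`X = diag x`, `Y = diag y` is nonsingular. -/
theorem stmt_0 (n : ℕ) (M : Matrix (Fin n) (Fin n) ℝ)
    (hM : ∀ v : Fin n → ℝ, 0 ≤ ∑ i, v i * M.mulVec v i)
    (x y : Fin n → ℝ) (hx : ∀ i, 0 < x i) (hy : ∀ i, 0 < y i) :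
    IsUnit (Matrix.fromBlocks (-M) (1 : Matrix (Fin n) (Fin n) ℝ)
      (Matrix.diagonal y) (Matrix.diagonal x)) := by
  rw [Matrix.isUnit_iff_isUnit_det, isUnit_iff_ne_zero]
  intro hdet
  obtain ⟨v, hv, hv0⟩ := Matrix.exists_mulVec_eq_zero_iff.2 hdet
  set u : Fin n → ℝ := v ∘ Sum.inl with hu
  set w : Fin n → ℝ := v ∘ Sum.inr with hw
  rw [Matrix.fromBlocks_mulVec] at hv0
  have h1 : ∀ i, -(M.mulVec u) i + w i = 0 := by
    intro i
    have := congrFun hv0 (Sum.inl i)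
    simpa [Matrix.neg_mulVec, Matrix.one_mulVec, hu, hw] using this
  have h2 : ∀ i, y i * u i + x i * w i = 0 := by
    intro i
    have := congrFun hv0 (Sum.inr i)
    simpa [Matrix.mulVec_diagonal, hu, hw] using this
  have hwMu : ∀ i, w i = M.mulVec u i := fun i => by linarith [h1 i]
  -- Each term u i * (M.mulVec u) i is nonpositive
  have hterm : ∀ i, u i * M.mulVec u i = -(y i / x i) * (u i)^2 := by
    intro i
    have hxi := (hx i).ne'
    have : M.mulVec u i = -(y i * u i) / x i := by
      rw [← hwMu i]; field_simp; linarith [h2 i]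
    rw [this]; ring
  have hle : ∀ i, u i * M.mulVec u i ≤ 0 := by
    intro i
    rw [hterm i]
    have : 0 ≤ (y i / x i) * (u i)^2 :=
      mul_nonneg (div_nonneg (hy i).le (hx i).le) (sq_nonneg _)
    linarith
  have hsum0 : ∑ i, u i * M.mulVec u i = 0 :=
    le_antisymm (Finset.sum_nonpos fun i _ => hle i) (hM u)
  have hiz : ∀ i, u i * M.mulVec u i = 0 := by
    intro i
    have := (Finset.sum_eq_zero_iff_of_nonpos (fun i _ => hle i)).1 hsum0 i (Finset.mem_univ i)
    exact this
  have hu0 : ∀ i, u i = 0 := by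
    intro i
    have := hiz i
    rw [hterm i] at this
    have hpos : 0 < y i / x i := div_pos (hy i) (hx i)
    have hs : u i ^ 2 = 0 := by
      rcases mul_eq_zero.1 this with h' | h'
      · exact absurd (neg_eq_zero.1 h') hpos.ne'
      · exact h'
    exact pow_eq_zero_iff two_ne_zero |>.1 hs
  have hw0 : ∀ i, w i = 0 := by
    intro i
    rw [hwMu i]
    simp [Matrix.mulVec, dotProduct]
    exact Finset.sum_eq_zero fun j _ => by rw [hu0 j]; ring
  apply hv
  funext i
  cases i with
  | inl i => exact hu0 i
  | inr i => exact hw0 i
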